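/- The map T(x,y) = (y, ⌊(1+x)/y⌋·y − x) maps the Farey triangle T = {(x,y) ∈ [0,1]² : x+y > 1} bijectively onto itself and is area-preserving. -/

import Mathlib

open Set MeasureTheory

/-- The Farey triangle `T = {(x,y) ∈ [0,1]² : x + y > 1}`. -/
def fareyTriangle : Set (ℝ × ℝ) :=
  {p | 0 ≤ p.1 ∧ p.1 ≤ 1 ∧ 0 ≤ p.2 ∧ p.2 ≤ 1 ∧ 1 < p.1 + p.2}

/-- The transformation `T(x,y) = (y, ⌊(1+x)/y⌋·y − x)`. -/
noncomputable def fareyMap (p : ℝ × ℝ) : ℝ × ℝ :=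
  (p.2, (⌊(1 + p.1) / p.2⌋ : ℝ) * p.2 - p.1)

/-- The inverse transformation `T⁻¹(x,y) = (⌊(1+y)/x⌋·x − y, x)`. -/
noncomputable def fareyInv (p : ℝ × ℝ) : ℝ × ℝ :=
  ((⌊(1 + p.2) / p.1⌋ : ℝ) * p.1 - p.2, p.1)

/-- `κ(x,y) = ⌊(1+x)/y⌋`. -/
noncomputable def fareyKappa (p : ℝ × ℝ) : ℤ := ⌊(1 + p.1) / p.2⌋

/-- `T_k = {(x,y) ∈ T : ⌊(1+x)/y⌋ = k}`. -/
def fareySubTriangle (k : ℕ) : Set (ℝ × ℝ) :=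
  {p ∈ fareyTriangle | ⌊(1 + p.1) / p.2⌋ = (k : ℤ)}

/- ### Auxiliary lemmas -/

lemma farey_floor_bounds {a c : ℝ} (hc : 0 < c) :
    (⌊(1 + a) / c⌋ : ℝ) * c ≤ 1 + a ∧ 1 + a < ((⌊(1 + a) / c⌋ : ℝ) + 1) * c := by
  constructor
  · have := Int.floor_le ((1 + a) / c)
    calc (⌊(1 + a) / c⌋ : ℝ) * c ≤ (1 + a) / c * c := by nlinarith
    _ = 1 + a := by field_simp
  · have := Int.lt_floor_add_one ((1 + a) / c)
    have h2 : (1 + a) / c * c < ((⌊(1 + a) / c⌋ : ℝ) + 1) * c := by nlinarith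
    calc 1 + a = (1 + a) / c * c := by field_simp
    _ < _ := h2

lemma farey_core_mem {a c : ℝ} (ha0 : 0 ≤ a) (ha1 : a ≤ 1) (hc1 : c ≤ 1) (h : 1 < a + c) :
    (c, (⌊(1 + a) / c⌋ : ℝ) * c - a) ∈ fareyTriangle := by
  have hc : 0 < c := by linarith
  obtain ⟨h1, h2⟩ := farey_floor_bounds (a := a) hc
  exact ⟨hc.le, hc1, by nlinarith, by nlinarith, by nlinarith⟩

lemma farey_floor_key {a c : ℝ} (hc : 0 < c) (ha1 : a ≤ 1) (h : 1 < a + c) :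
    ⌊(1 + ((⌊(1 + a) / c⌋ : ℝ) * c - a)) / c⌋ = ⌊(1 + a) / c⌋ := by
  have hne : c ≠ 0 := hc.ne'
  have heq : (1 + ((⌊(1 + a) / c⌋ : ℝ) * c - a)) / c = (1 - a) / c + (⌊(1 + a) / c⌋ : ℤ) := by
    push_cast
    field_simp
    ring
  rw [heq, Int.floor_add_intCast, Int.floor_eq_zero_iff.mpr, zero_add]
  constructor
  · exact div_nonneg (by linarith) hc.le
  · rw [div_lt_one hc]; linarith

lemma fareyMap_mapsTo : MapsTo fareyMap fareyTriangle fareyTriangle := by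
  rintro ⟨x, y⟩ ⟨h1, h2, h3, h4, h5⟩
  exact farey_core_mem h1 h2 h4 h5

lemma fareyInv_mapsTo : MapsTo fareyInv fareyTriangle fareyTriangle := by
  rintro ⟨x, y⟩ ⟨h1, h2, h3, h4, h5⟩
  have := farey_core_mem h3 h4 h2 (by linarith)
  obtain ⟨a1, a2, a3, a4, a5⟩ := this
  exact ⟨a3, a4, a1, a2, by dsimp [fareyInv]; dsimp at a5 ⊢; linarith⟩

lemma fareyInv_fareyMap {p : ℝ × ℝ} (hp : p ∈ fareyTriangle) : fareyInv (fareyMap p) = p := by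
  obtain ⟨x, y⟩ := p
  obtain ⟨h1, h2, h3, h4, h5⟩ := hp
  have hy : 0 < y := by linarith
  simp only [fareyMap, fareyInv]
  rw [farey_floor_key hy h2 h5]
  simp only [Prod.mk.injEq]
  exact ⟨by ring, trivial⟩

lemma fareyMap_fareyInv {p : ℝ × ℝ} (hp : p ∈ fareyTriangle) : fareyMap (fareyInv p) = p := by
  obtain ⟨x, y⟩ := p
  obtain ⟨h1, h2, h3, h4, h5⟩ := hp
  have hx : 0 < x := by linarith
  simp only [fareyMap, fareyInv]
  rw [farey_floor_key hx h4 (by linarith)]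
  simp only [Prod.mk.injEq]
  exact ⟨trivial, by ring⟩

lemma fareyMap_bijOn : Set.BijOn fareyMap fareyTriangle fareyTriangle :=
  Set.InvOn.bijOn ⟨fun p hp => fareyInv_fareyMap hp, fun p hp => fareyMap_fareyInv hp⟩
    fareyMap_mapsTo fareyInv_mapsTo

/-- The affine piece `L_k(x,y) = (y, ky - x)`. -/
noncomputable def fareyL (k : ℤ) (p : ℝ × ℝ) : ℝ × ℝ := (p.2, (k : ℝ) * p.2 - p.1)

/-- Its inverse `g_k(x,y) = (kx - y, x)`. -/
noncomputable def fareyG (k : ℤ) (p : ℝ × ℝ) : ℝ × ℝ := ((k : ℝ) * p.1 - p.2, p.1)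

lemma fareyG_fareyL (k : ℤ) (p : ℝ × ℝ) : fareyG k (fareyL k p) = p := by
  simp [fareyL, fareyG]

lemma fareyL_fareyG (k : ℤ) (p : ℝ × ℝ) : fareyL k (fareyG k p) = p := by
  simp [fareyL, fareyG]

lemma fareyG_measurePreserving (k : ℤ) :
    MeasurePreserving (fareyG k) (volume : Measure (ℝ × ℝ)) volume := by
  have h1 : MeasurePreserving (fun p : ℝ × ℝ => (p.1, (k : ℝ) * p.1 - p.2))
      ((volume : Measure ℝ).prod volume) ((volume : Measure ℝ).prod volume) := by
    apply (MeasurePreserving.id volume).skew_product (g := fun a t => (k : ℝ) * a - t)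
    · exact (measurable_fst.const_mul _).sub measurable_snd
    · exact Filter.Eventually.of_forall fun a =>
        (Measure.measurePreserving_sub_left volume ((k : ℝ) * a)).map_eq
  have h2 : MeasurePreserving (Prod.swap : ℝ × ℝ → ℝ × ℝ)
      ((volume : Measure ℝ).prod volume) ((volume : Measure ℝ).prod volume) :=
    Measure.measurePreserving_swap
  have h3 := h2.comp h1
  have : fareyG k = Prod.swap ∘ (fun p : ℝ × ℝ => (p.1, (k : ℝ) * p.1 - p.2)) := by
    ext p <;> simp [fareyG]
  rw [this]
  exact h3

lemma fareyL_image_eq_preimage (k : ℤ) (E : Set (ℝ × ℝ)) :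
    fareyL k '' E = fareyG k ⁻¹' E := by
  ext p
  constructor
  · rintro ⟨q, hq, rfl⟩
    simpa [fareyG_fareyL] using hq
  · intro hp
    exact ⟨fareyG k p, hp, fareyL_fareyG k p⟩

lemma fareyKappa_measurable : Measurable fareyKappa := by
  apply Measurable.floor
  exact (measurable_const.add measurable_fst).div measurable_snd

theorem fareyMap_bijOn_and_areaPreserving :
    Set.BijOn fareyMap fareyTriangle fareyTriangle ∧
      ∀ s ⊆ fareyTriangle, MeasurableSet s →
        volume (fareyMap '' s) = volume s := by
  refine ⟨fareyMap_bijOn, fun s hs hms => ?_⟩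
  -- pieces
  set sk : ℤ → Set (ℝ × ℝ) := fun k => s ∩ fareyKappa ⁻¹' {k} with hsk
  have hmsk : ∀ k, MeasurableSet (sk k) := fun k =>
    hms.inter (fareyKappa_measurable (measurableSet_singleton k))
  have hsunion : s = ⋃ k, sk k := by
    ext p
    simp only [mem_iUnion, hsk, mem_inter_iff, mem_preimage, mem_singleton_iff]
    exact ⟨fun h => ⟨fareyKappa p, h, rfl⟩, fun ⟨k, h, _⟩ => h⟩
  have hdisj : Pairwise (Function.onFun Disjoint sk) := by
    intro i j hij
    apply Set.disjoint_left.mpr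
    rintro p ⟨_, hi⟩ ⟨_, hj⟩
    exact hij (hi.symm.trans hj)
  -- fareyMap agrees with fareyL k on sk k
  have hagree : ∀ k, ∀ p ∈ sk k, fareyMap p = fareyL k p := by
    rintro k p ⟨_, hk⟩
    simp only [mem_preimage, mem_singleton_iff, fareyKappa] at hk
    simp [fareyMap, fareyL, hk]
  have himg : fareyMap '' s = ⋃ k, fareyL k '' sk k := by
    rw [hsunion, image_iUnion]
    exact iUnion_congr fun k => image_congr (hagree k)
  -- disjointness of images
  have hinj := fareyMap_bijOn.injOn
  have hdisj' : Pairwise (Function.onFun Disjoint (fun k => fareyL k '' sk k)) := by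
    intro i j hij
    apply Set.disjoint_left.mpr
    rintro q ⟨p, hp, rfl⟩ ⟨p', hp', heq⟩
    rw [← hagree i p hp, ← hagree j p' hp'] at heq
    have hpT : p ∈ fareyTriangle := hs hp.1
    have hp'T : p' ∈ fareyTriangle := hs hp'.1
    have : p' = p := hinj hp'T hpT heq
    subst this
    exact hij (hp.2.symm.trans hp'.2)
  have hvol : ∀ k, volume (fareyL k '' sk k) = volume (sk k) := fun k => by
    rw [fareyL_image_eq_preimage]
    exact (fareyG_measurePreserving k).measure_preimage (hmsk k).nullMeasurableSet
  have hmimg : ∀ k, MeasurableSet (fareyL k '' sk k) := fun k => by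
    rw [fareyL_image_eq_preimage]
    exact (fareyG_measurePreserving k).measurable (hmsk k)
  rw [himg, measure_iUnion hdisj' hmimg]
  conv_rhs => rw [hsunion]
  rw [measure_iUnion hdisj hmsk]
  exact tsum_congr hvol
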